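/- arXiv:2508.12135 — 2 statements merged into one kernel-verified Lean document; each statement's English description precedes it below -/
import Mathlib

section
/- Let E_n be the n×n skew-symmetric matrix with (i,j)-entry 1 if i < j, −1 if i > j, and 0 if i = j, and let U_n be the upper triangular matrix with 1's on the diagonal and 2's above. Then U_n = E_n + J_n where J_n is the all-ones matrix, and consequently for any m×n matrix Z with m even, det[Z U_n Zᵀ] = det[Z E_n Zᵀ]. -/
open Matrix

/-- The `n × n` skew-symmetric matrix with `(i,j)` entry `sign (j - i)`. -/
def En (R : Type*) [CommRing R] (n : ℕ) : Matrix (Fin n) (Fin n) R :=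
  Matrix.of fun i j => if i < j then 1 else if j < i then -1 else 0

/-- The `n × n` upper triangular matrix with `1`'s on the diagonal and `2`'s above. -/
def Un (R : Type*) [CommRing R] (n : ℕ) : Matrix (Fin n) (Fin n) R :=
  Matrix.of fun i j => if i < j then 2 else if i = j then 1 else 0

lemma map_vecMulVec {R S : Type*} [CommRing R] [CommRing S] (f : R →+* S) {m : Type*}
    (u v : m → R) : (vecMulVec u v).map f = vecMulVec (f ∘ u) (f ∘ v) := by
  ext i j
  simp [vecMulVec_apply]

-- generic skew matrix
noncomputable def Sgen (l : ℕ) :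
    Matrix (Fin (2*l)) (Fin (2*l)) (MvPolynomial ((Fin (2*l) × Fin (2*l)) ⊕ Fin (2*l)) ℤ) :=
  Matrix.of fun i j =>
    if i < j then MvPolynomial.X (Sum.inl (i, j))
    else if j < i then -MvPolynomial.X (Sum.inl (j, i)) else 0

lemma Sgen_transpose (l : ℕ) : (Sgen l)ᵀ = -(Sgen l) := by
  ext i j
  simp only [Sgen, transpose_apply, neg_apply, Matrix.of_apply]
  rcases lt_trichotomy i j with h | h | h
  · simp [h, h.not_gt]
  · simp [h]
  · simp [h, h.not_gt]


noncomputable def Kmat (l : ℕ) : Matrix (Fin (2*l)) (Fin (2*l)) ℚ :=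
  Matrix.reindexAlgEquiv ℚ ℚ (finSumFinEquiv.trans (finCongr (two_mul l).symm))
    (Matrix.fromBlocks 0 1 (-1) 0)

lemma Kmat_mul_neg (l : ℕ) : Kmat l * (-(Kmat l)) = 1 := by
  unfold Kmat
  rw [← map_neg, ← _root_.map_mul]
  have : (Matrix.fromBlocks 0 1 (-1) 0 : Matrix (Fin l ⊕ Fin l) (Fin l ⊕ Fin l) ℚ) *
      (-(Matrix.fromBlocks 0 1 (-1) 0)) = 1 := by
    simp [Matrix.fromBlocks_neg, Matrix.fromBlocks_multiply, ← Matrix.fromBlocks_one]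
  rw [this, _root_.map_one]

lemma Kmat_transpose (l : ℕ) : (Kmat l)ᵀ = -(Kmat l) := by
  unfold Kmat
  rw [← map_neg]
  simp only [Matrix.reindexAlgEquiv_apply, Matrix.transpose_reindex, Matrix.fromBlocks_transpose,
    Matrix.fromBlocks_neg]
  simp

lemma Kmat_det_isUnit (l : ℕ) : IsUnit (Kmat l).det := by
  apply IsUnit.of_mul_eq_one (-(Kmat l)).det
  rw [← Matrix.det_mul, Kmat_mul_neg, Matrix.det_one]

lemma Kmat_diag (l : ℕ) (i : Fin (2*l)) : Kmat l i i = 0 := by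
  have h := congrFun (congrFun (Kmat_transpose l) i) i
  simp only [Matrix.transpose_apply, Matrix.neg_apply] at h
  linarith

lemma Sgen_det_ne_zero (l : ℕ) : (Sgen l).det ≠ 0 := by
  intro h
  let ψ : MvPolynomial ((Fin (2*l) × Fin (2*l)) ⊕ Fin (2*l)) ℤ →+* ℚ :=
    MvPolynomial.eval₂Hom (Int.castRingHom ℚ) (Sum.elim (fun p => Kmat l p.1 p.2) 0)
  have hmap : (Sgen l).map ψ = Kmat l := by
    ext i j
    simp only [Sgen, Matrix.map_apply, Matrix.of_apply]
    rcases lt_trichotomy i j with hij | hij | hij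
    · simp [hij, ψ]
    · subst hij
      simp [ψ, Kmat_diag]
    · have hK := congrFun (congrFun (Kmat_transpose l) j) i
      simp only [Matrix.transpose_apply, Matrix.neg_apply] at hK
      simp [hij, hij.not_gt, ψ, hK]
  have := RingHom.map_det ψ (Sgen l)
  rw [h, map_zero] at this
  rw [RingHom.mapMatrix_apply, hmap] at this
  exact (Kmat_det_isUnit l).ne_zero this.symm

lemma Sgen_key (l : ℕ) :
    (Sgen l + vecMulVec (fun i => MvPolynomial.X (Sum.inr i))
      (fun i => MvPolynomial.X (Sum.inr i))).det = (Sgen l).det := by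
  set P := MvPolynomial ((Fin (2*l) × Fin (2*l)) ⊕ Fin (2*l)) ℤ
  let F := FractionRing P
  haveI : CharZero F := charZero_of_injective_algebraMap (IsFractionRing.injective P F)
  apply IsFractionRing.injective P F
  rw [RingHom.map_det, RingHom.map_det, RingHom.mapMatrix_apply, RingHom.mapMatrix_apply,
    Matrix.map_add _ (map_add (algebraMap P F)), map_vecMulVec]
  set A : Matrix (Fin (2*l)) (Fin (2*l)) F := (Sgen l).map (algebraMap P F) with hA
  set w : Fin (2*l) → F := (algebraMap P F) ∘ (fun i => MvPolynomial.X (Sum.inr i)) with hw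
  have hAdet : IsUnit A.det := by
    rw [hA, ← RingHom.mapMatrix_apply, ← RingHom.map_det]
    apply isUnit_iff_ne_zero.mpr
    intro h
    exact Sgen_det_ne_zero l ((map_eq_zero_iff _ (IsFractionRing.injective P F)).mp h)
  have hAT : Aᵀ = -A := by
    rw [hA, ← Matrix.transpose_map]
    rw [Sgen_transpose]
    ext i j
    simp
  have hinv : (-A)⁻¹ = -(A⁻¹) := by
    apply inv_eq_right_inv
    rw [Matrix.neg_mul, Matrix.mul_neg, neg_neg, Matrix.mul_nonsing_inv _ hAdet]
  rw [vecMulVec_eq (Fin 1), Matrix.det_add_replicateCol_mul_replicateRow hAdet]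
  have hM : Matrix.replicateRow (Fin 1) w * A⁻¹ * Matrix.replicateCol (Fin 1) w = 0 := by
    set M := Matrix.replicateRow (Fin 1) w * A⁻¹ * Matrix.replicateCol (Fin 1) w with hMdef
    have hMT : Mᵀ = -M := by
      rw [hMdef, Matrix.transpose_mul, Matrix.transpose_mul, Matrix.transpose_replicateCol,
        Matrix.transpose_replicateRow, Matrix.transpose_nonsing_inv, hAT, hinv]
      rw [Matrix.neg_mul, Matrix.mul_neg, ← Matrix.mul_assoc]
    ext i j
    have hij : i = j := Subsingleton.elim i j
    subst hij
    have h := congrFun (congrFun hMT i) i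
    simp only [Matrix.transpose_apply, Matrix.neg_apply] at h
    have h2 : M i i = 0 := by linear_combination h / 2
    simpa using h2
  rw [hM, add_zero]
  simp

lemma skew_key {R : Type*} [CommRing R] {l : ℕ} (S : Matrix (Fin (2*l)) (Fin (2*l)) R)
    (hS : Sᵀ = -S) (hd : ∀ i, S i i = 0) (v : Fin (2*l) → R) :
    (S + vecMulVec v v).det = S.det := by
  let φ : MvPolynomial ((Fin (2*l) × Fin (2*l)) ⊕ Fin (2*l)) ℤ →+* R :=
    MvPolynomial.eval₂Hom (Int.castRingHom R) (Sum.elim (fun p => S p.1 p.2) v)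
  have hφS : (Sgen l).map φ = S := by
    ext i j
    simp only [Sgen, Matrix.map_apply, Matrix.of_apply]
    rcases lt_trichotomy i j with hij | hij | hij
    · simp [hij, φ]
    · subst hij
      simp only [lt_irrefl, if_false, map_zero]
      exact (hd i).symm
    · have h1 : S j i = - S i j := by
        have h2 := congrFun (congrFun hS j) i
        simp only [Matrix.transpose_apply, Matrix.neg_apply] at h2
        rw [h2, neg_neg]
      simp [hij, hij.not_gt, φ, h1]
  have hφv : (φ ∘ (fun i => MvPolynomial.X (Sum.inr i)) : Fin (2*l) → R) = v := by
    ext i; simp [φ]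
  have h := congrArg φ (Sgen_key l)
  rw [RingHom.map_det, RingHom.map_det, RingHom.mapMatrix_apply, RingHom.mapMatrix_apply,
    Matrix.map_add _ (map_add φ), map_vecMulVec, hφS, hφv] at h
  exact h

lemma En_transpose (R : Type*) [CommRing R] (n : ℕ) : (En R n)ᵀ = -(En R n) := by
  ext i j
  simp only [En, transpose_apply, neg_apply, Matrix.of_apply]
  rcases lt_trichotomy i j with h | h | h
  · simp [h, h.not_gt]
  · simp [h]
  · simp [h, h.not_gt]

/-- `Uₙ = Eₙ + Jₙ` where `Jₙ` is the all-ones matrix, and consequently, for any matrix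
`Z` with an even number `m = 2l` of rows and `n` columns,
`det (Z Uₙ Zᵀ) = det (Z Eₙ Zᵀ)`. -/
theorem Un_eq_En_add_ones_and_det {R : Type*} [CommRing R] (n : ℕ) :
    (Un R n = En R n + Matrix.of (fun _ _ => (1 : R))) ∧
    ∀ (l : ℕ) (Z : Matrix (Fin (2 * l)) (Fin n) R),
      Matrix.det (Z * Un R n * Zᵀ) = Matrix.det (Z * En R n * Zᵀ) := by
  have hUE : Un R n = En R n + Matrix.of (fun _ _ => (1 : R)) := by
    ext i j
    simp only [Un, En, Matrix.add_apply, Matrix.of_apply]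
    rcases lt_trichotomy i j with h | h | h
    · simp [h, h.ne]
      norm_num
    · simp [h]
    · simp [h, h.not_gt, h.ne']
  refine ⟨hUE, fun l Z => ?_⟩
  set S := Z * En R n * Zᵀ with hSdef
  set v : Fin (2*l) → R := fun i => ∑ j, Z i j with hv
  have hZJ : Z * (Matrix.of (fun _ _ => (1 : R)) : Matrix (Fin n) (Fin n) R) * Zᵀ = vecMulVec v v := by
    ext i k
    simp only [Matrix.mul_apply, Matrix.of_apply, Matrix.transpose_apply, vecMulVec_apply, hv,
      mul_one]
    rw [← Finset.mul_sum]
  have hST : Sᵀ = -S := by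
    rw [hSdef, Matrix.transpose_mul, Matrix.transpose_mul, Matrix.transpose_transpose,
      En_transpose, Matrix.neg_mul, Matrix.mul_neg, Matrix.mul_assoc]
  have hd : ∀ i, S i i = 0 := by
    intro i
    have hexp : S i i = ∑ p ∈ Finset.univ ×ˢ Finset.univ,
        Z i p.2 * En R n p.2 p.1 * Z i p.1 := by
      rw [hSdef]
      simp only [Matrix.mul_apply, Matrix.transpose_apply, Finset.sum_mul]
      rw [← Finset.sum_product']
    rw [hexp]
    apply Finset.sum_ninvolution Prod.swap
    · intro p
      have hE : En R n p.2 p.1 = -(En R n p.1 p.2) := by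
        have h3 := congrFun (congrFun (En_transpose R n) p.1) p.2
        simpa [Matrix.transpose_apply, Matrix.neg_apply] using h3
      simp only [Prod.fst_swap, Prod.snd_swap]
      rw [hE]
      ring
    · intro p hp
      intro hc
      apply hp
      have h12 : p.2 = p.1 := congrArg Prod.fst hc
      have hz : En R n p.2 p.1 = 0 := by
        rw [h12]
        simp [En]
      rw [hz, mul_zero, zero_mul]
    · intro p
      simp
    · intro p; exact Prod.swap_swap p
  calc (Z * Un R n * Zᵀ).det = (S + vecMulVec v v).det := by
        rw [hUE, Matrix.mul_add, Matrix.add_mul, hZJ, hSdef]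
      _ = S.det := skew_key S hST hd v
end

section
/- Lindström–Gessel–Viennot: Let G be a locally finite acyclic weighted directed graph and u_1,...,u_m, v_1,...,v_m vertices. Then Σ_{σ ∈ S_m} sgn(σ)·GF[P_0(u_σ, v)] = det[GF[P(u_i, v_j)]]_{1≤i,j≤m}, where GF[P(u,v)] is the sum of weights of directed paths from u to v and GF[P_0(u_σ, v)] is the weighted count of m-tuples of pairwise vertex-disjoint paths with path k going from u_{σ(k)} to v_k. -/
open Finset

/-- The weight of a path, given as a list of visited vertices: the product of the
weights of its consecutive edges. -/
def pathWeight {V : Type*} {R : Type*} [CommRing R] (w : V → V → R) : List V → R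
  | [] => 1
  | [_] => 1
  | a :: b :: t => w a b * pathWeight w (b :: t)

/-- The generating function of all directed paths from `u` to `v`:
the sum of the weights of all vertex lists starting at `u` and ending at `v`. -/
noncomputable def pathGF {V : Type*} {R : Type*} [CommRing R] (w : V → V → R) (u v : V) : R :=
  ∑ᶠ l ∈ {l : List V | l.head? = some u ∧ l.getLast? = some v}, pathWeight w l

namespace LGVAux

variable {V : Type*} [Fintype V] [DecidableEq V] {R : Type*} [CommRing R]

theorem pathWeight_cons_cons (w : V → V → R) (a b : V) (t : List V) :
    pathWeight w (a :: b :: t) = w a b * pathWeight w (b :: t) := rfl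

theorem chain'_of_pathWeight_ne_zero (w : V → V → R) :
    ∀ {l : List V}, pathWeight w l ≠ 0 → l.Chain' (fun a b => w a b ≠ 0)
  | [], _ => List.isChain_nil
  | [_], _ => List.isChain_singleton _
  | a :: b :: t, h => by
    rw [pathWeight_cons_cons] at h
    have hw : w a b ≠ 0 := fun h0 => h (by rw [h0, zero_mul])
    have ht : pathWeight w (b :: t) ≠ 0 := fun h0 => h (by rw [h0, mul_zero])
    exact List.isChain_cons_cons.mpr ⟨hw, chain'_of_pathWeight_ne_zero w ht⟩

theorem pathWeight_append (w : V → V → R) (x : V) :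
    ∀ (A : List V) (B : List V),
      pathWeight w (A ++ x :: B) = pathWeight w (A ++ [x]) * pathWeight w (x :: B)
  | [], B => by simp [pathWeight]
  | [a], B => by simp [pathWeight, pathWeight_cons_cons]
  | a :: a' :: A, B => by
    have ih := pathWeight_append w x (a' :: A) B
    simp only [List.cons_append] at ih ⊢
    rw [pathWeight_cons_cons, pathWeight_cons_cons, ih]
    ring

theorem nodup_of_chain' {w : V → V → R} {rank : V → ℕ}
    (hacyc : ∀ a b, w a b ≠ 0 → rank a < rank b)
    {l : List V} (hc : l.Chain' (fun a b => w a b ≠ 0)) : l.Nodup := by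
  haveI : IsTrans V (fun a b => rank a < rank b) := ⟨fun _ _ _ => Nat.lt_trans⟩
  have h2 : l.Chain' (fun a b => rank a < rank b) := hc.imp (fun a b h => hacyc a b h)
  exact (List.isChain_iff_pairwise.mp h2).imp fun h e => absurd (e ▸ h) (lt_irrefl _)

noncomputable def pathFinset (w : V → V → R) (u v : V) : Finset (List V) :=
  Set.Finite.toFinset (s := {l : List V | l.length ≤ Fintype.card V ∧ l.head? = some u ∧
      l.getLast? = some v ∧ l.Chain' (fun a b => w a b ≠ 0)})
    ((List.finite_length_le V (Fintype.card V)).subset fun _ hl => hl.1)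

theorem mem_pathFinset {w : V → V → R} {rank : V → ℕ}
    (hacyc : ∀ a b, w a b ≠ 0 → rank a < rank b) {u v : V} {l : List V} :
    l ∈ pathFinset w u v ↔
      l.head? = some u ∧ l.getLast? = some v ∧ l.Chain' (fun a b => w a b ≠ 0) := by
  rw [pathFinset, Set.Finite.mem_toFinset]
  refine ⟨fun h => h.2, fun h => ⟨(nodup_of_chain' hacyc h.2.2).length_le_card, h⟩⟩

theorem pathGF_eq {w : V → V → R} {rank : V → ℕ}
    (hacyc : ∀ a b, w a b ≠ 0 → rank a < rank b) (u v : V) :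
    pathGF w u v = ∑ l ∈ pathFinset w u v, pathWeight w l := by
  apply finsum_mem_eq_sum_of_inter_support_eq
  ext l
  simp only [Set.mem_inter_iff, Set.mem_setOf_eq, Function.mem_support, Finset.mem_coe,
    mem_pathFinset hacyc]
  constructor
  · rintro ⟨⟨h1, h2⟩, h3⟩
    exact ⟨⟨h1, h2, chain'_of_pathWeight_ne_zero w h3⟩, h3⟩
  · rintro ⟨⟨h1, h2, _⟩, h3⟩
    exact ⟨⟨h1, h2⟩, h3⟩



variable {V : Type*} [DecidableEq V]

def preL (l : List V) (x : V) : List V := l.takeWhile (fun y => decide (y ≠ x))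
def sufL (l : List V) (x : V) : List V := l.dropWhile (fun y => decide (y ≠ x))

theorem preL_append_sufL (l : List V) (x : V) : preL l x ++ sufL l x = l := by
  unfold preL sufL; exact List.takeWhile_append_dropWhile

theorem ne_of_mem_preL {l : List V} {x y : V} (h : y ∈ preL l x) : y ≠ x := by
  have := List.mem_takeWhile_imp h
  simpa using this

theorem sufL_eq_cons {x : V} {l : List V} (hl : x ∈ l) : ∃ B, sufL l x = x :: B := by
  induction l with
  | nil => simp at hl
  | cons a t ih =>
    by_cases hax : a = x
    · subst hax
      exact ⟨t, by simp [sufL]⟩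
    · have hx : x ∈ t := by
        rcases List.mem_cons.mp hl with h | h
        · exact absurd h.symm hax
        · exact h
      obtain ⟨B, hB⟩ := ih hx
      refine ⟨B, ?_⟩
      show List.dropWhile _ (a :: t) = x :: B
      rw [List.dropWhile_cons_of_pos (by simp [hax])]
      exact hB

theorem preL_append_cons {x : V} {A : List V} (hA : ∀ y ∈ A, y ≠ x) (B : List V) :
    preL (A ++ x :: B) x = A := by
  induction A with
  | nil =>
    show List.takeWhile _ (x :: B) = []
    rw [List.takeWhile_cons_of_neg (by simp)]
  | cons a t ih =>
    have ha : a ≠ x := hA a (List.mem_cons_self)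
    show List.takeWhile _ (a :: (t ++ x :: B)) = a :: t
    rw [List.takeWhile_cons_of_pos (by simp [ha])]
    exact congrArg (a :: ·) (ih fun y hy => hA y (List.mem_cons_of_mem a hy))

theorem sufL_append_cons {x : V} {A : List V} (hA : ∀ y ∈ A, y ≠ x) (B : List V) :
    sufL (A ++ x :: B) x = x :: B := by
  induction A with
  | nil =>
    show List.dropWhile _ (x :: B) = x :: B
    rw [List.dropWhile_cons_of_neg (by simp)]
  | cons a t ih =>
    have ha : a ≠ x := hA a (List.mem_cons_self)
    show List.dropWhile _ (a :: (t ++ x :: B)) = x :: B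
    rw [List.dropWhile_cons_of_pos (by simp [ha])]
    exact ih fun y hy => hA y (List.mem_cons_of_mem a hy)

theorem dropWhile_append_cons {p : V → Bool} {A : List V} {x : V}
    (hA : ∀ y ∈ A, p y = true) (hx : p x = false) (B : List V) :
    (A ++ x :: B).dropWhile p = x :: B := by
  induction A with
  | nil =>
    show List.dropWhile p (x :: B) = x :: B
    rw [List.dropWhile_cons_of_neg (by simp [hx])]
  | cons a t ih =>
    show List.dropWhile p (a :: (t ++ x :: B)) = x :: B
    rw [List.dropWhile_cons_of_pos (by simp [hA a (List.mem_cons_self)])]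
    exact ih fun y hy => hA y (List.mem_cons_of_mem a hy)

theorem head?_append_cons (A : List V) (x : V) (B : List V) :
    (A ++ x :: B).head? = some (A.headD x) := by
  cases A <;> simp

theorem getLast?_append_cons (A : List V) (x : V) (B : List V) :
    (A ++ x :: B).getLast? = (x :: B).getLast? := by
  rw [List.getLast?_append]
  cases h : (x :: B).getLast? with
  | none => simp at h
  | some a => simp

theorem exists_first {p : V → Bool} {l : List V} (h : ∃ y ∈ l, p y = true) :
    ∃ A x B, l = A ++ x :: B ∧ (∀ y ∈ A, p y = false) ∧ p x = true := by
  induction l with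
  | nil => simp at h
  | cons a t ih =>
    by_cases hpa : p a = true
    · exact ⟨[], a, t, rfl, by simp, hpa⟩
    · obtain ⟨y, hy, hpy⟩ := h
      have hyt : y ∈ t := by
        rcases List.mem_cons.mp hy with h | h
        · exact absurd (h ▸ hpy) hpa
        · exact h
      obtain ⟨A, x, B, h1, h2, h3⟩ := ih ⟨y, hyt, hpy⟩
      refine ⟨a :: A, x, B, by rw [h1]; rfl, ?_, h3⟩
      intro z hz
      rcases List.mem_cons.mp hz with h | h
      · subst h; exact Bool.eq_false_iff.mpr hpa
      · exact h2 z h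

section Invol

variable {m : ℕ}

def otherP (P : Fin m → List V) (i : Fin m) (y : V) : Prop := ∃ b, b ≠ i ∧ y ∈ P b

instance (P : Fin m → List V) (i : Fin m) (y : V) : Decidable (otherP P i y) := by
  unfold otherP; infer_instance

def interP (P : Fin m → List V) (a : Fin m) : Prop := ∃ y ∈ P a, otherP P a y

instance (P : Fin m → List V) (a : Fin m) : Decidable (interP P a) := by
  unfold interP; infer_instance

variable [NeZero m] [Inhabited V]

def iIdx (P : Fin m → List V) : Fin m :=
  if h : (Finset.univ.filter (interP P)).Nonempty then (Finset.univ.filter (interP P)).min' h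
  else ⟨0, Nat.pos_of_ne_zero (NeZero.ne m)⟩

def xVert (P : Fin m → List V) : V :=
  ((P (iIdx P)).dropWhile (fun y => !decide (otherP P (iIdx P) y))).headI

def jIdx (P : Fin m → List V) : Fin m :=
  if h : (Finset.univ.filter (fun b => b ≠ iIdx P ∧ xVert P ∈ P b)).Nonempty then
    (Finset.univ.filter (fun b => b ≠ iIdx P ∧ xVert P ∈ P b)).min' h
  else ⟨0, Nat.pos_of_ne_zero (NeZero.ne m)⟩

def gP (P : Fin m → List V) : Fin m → List V := fun k =>
  if k = iIdx P then preL (P (iIdx P)) (xVert P) ++ sufL (P (jIdx P)) (xVert P)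
  else if k = jIdx P then preL (P (jIdx P)) (xVert P) ++ sufL (P (iIdx P)) (xVert P)
  else P k

variable {P : Fin m → List V}

theorem interP_iIdx (hne : ∃ a, interP P a) : interP P (iIdx P) := by
  obtain ⟨a, ha⟩ := hne
  have hS : (Finset.univ.filter (interP P)).Nonempty :=
    ⟨a, Finset.mem_filter.mpr ⟨Finset.mem_univ a, ha⟩⟩
  rw [iIdx, dif_pos hS]
  exact (Finset.mem_filter.mp ((Finset.univ.filter (interP P)).min'_mem hS)).2

theorem iIdx_min (hne : ∃ a, interP P a) {a : Fin m} (ha : interP P a) : iIdx P ≤ a := by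
  obtain ⟨a₀, ha₀⟩ := hne
  have hS : (Finset.univ.filter (interP P)).Nonempty :=
    ⟨a₀, Finset.mem_filter.mpr ⟨Finset.mem_univ a₀, ha₀⟩⟩
  rw [iIdx, dif_pos hS]
  exact Finset.min'_le _ a (Finset.mem_filter.mpr ⟨Finset.mem_univ a, ha⟩)

theorem xVert_spec (hne : ∃ a, interP P a) :
    ∃ A B, P (iIdx P) = A ++ xVert P :: B ∧
      preL (P (iIdx P)) (xVert P) = A ∧
      sufL (P (iIdx P)) (xVert P) = xVert P :: B ∧
      (∀ y ∈ A, ¬ otherP P (iIdx P) y) ∧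
      otherP P (iIdx P) (xVert P) := by
  obtain ⟨y, hy, hoy⟩ := interP_iIdx hne
  obtain ⟨A, x, B, hdec, hA, hx⟩ :=
    exists_first (p := fun y => decide (otherP P (iIdx P) y)) ⟨y, hy, by simpa using hoy⟩
  have hox : otherP P (iIdx P) x := by simpa using hx
  have hAno : ∀ y ∈ A, ¬ otherP P (iIdx P) y := fun y hy => by simpa using hA y hy
  have hxv : xVert P = x := by
    rw [xVert, hdec, dropWhile_append_cons (fun y hy => by simp [hAno y hy])
      (by simpa using hox) B]
    rfl
  have hAx : ∀ y ∈ A, y ≠ x := fun y hy he => hAno y hy (he ▸ hox)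
  subst hxv
  exact ⟨A, B, hdec, by rw [hdec]; exact preL_append_cons hAx B,
    by rw [hdec]; exact sufL_append_cons hAx B, hAno, hox⟩

theorem jIdx_spec (hne : ∃ a, interP P a) :
    jIdx P ≠ iIdx P ∧ xVert P ∈ P (jIdx P) ∧
      ∀ b, b ≠ iIdx P → xVert P ∈ P b → jIdx P ≤ b := by
  obtain ⟨_, _, _, _, _, _, hox⟩ := xVert_spec hne
  obtain ⟨b₀, hb₀, hxb₀⟩ := hox
  have hS : (Finset.univ.filter (fun b => b ≠ iIdx P ∧ xVert P ∈ P b)).Nonempty :=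
    ⟨b₀, Finset.mem_filter.mpr ⟨Finset.mem_univ _, hb₀, hxb₀⟩⟩
  have hmem := (Finset.mem_filter.mp
    ((Finset.univ.filter (fun b => b ≠ iIdx P ∧ xVert P ∈ P b)).min'_mem hS)).2
  rw [jIdx, dif_pos hS]
  exact ⟨hmem.1, hmem.2, fun b hb hxb =>
    Finset.min'_le _ b (Finset.mem_filter.mpr ⟨Finset.mem_univ b, hb, hxb⟩)⟩

theorem gP_apply_i (P : Fin m → List V) :
    gP P (iIdx P) = preL (P (iIdx P)) (xVert P) ++ sufL (P (jIdx P)) (xVert P) := by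
  simp [gP]

theorem gP_apply_j {P : Fin m → List V} (hji : jIdx P ≠ iIdx P) :
    gP P (jIdx P) = preL (P (jIdx P)) (xVert P) ++ sufL (P (iIdx P)) (xVert P) := by
  simp [gP, hji]

theorem gP_apply_k {P : Fin m → List V} {k : Fin m} (h1 : k ≠ iIdx P) (h2 : k ≠ jIdx P) :
    gP P k = P k := by
  simp only [gP, if_neg h1, if_neg h2]

theorem gP_spec (hne : ∃ a, interP P a) (hnd : ∀ k, (P k).Nodup) :
    iIdx P ≠ jIdx P ∧
    iIdx (gP P) = iIdx P ∧ jIdx (gP P) = jIdx P ∧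
    gP (gP P) = P ∧
    (∃ A B C D,
      P (iIdx P) = A ++ xVert P :: B ∧ P (jIdx P) = D ++ xVert P :: C ∧
      gP P (iIdx P) = A ++ xVert P :: C ∧ gP P (jIdx P) = D ++ xVert P :: B ∧
      ∀ k, k ≠ iIdx P → k ≠ jIdx P → gP P k = P k) := by
  obtain ⟨A, B, hPi, hpreI, hsufI, hAno, hox⟩ := xVert_spec hne
  obtain ⟨hji, hxj, hjmin⟩ := jIdx_spec hne
  have hij : iIdx P ≠ jIdx P := fun h => hji h.symm
  obtain ⟨C, hsufJ⟩ := sufL_eq_cons hxj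
  have hPj : P (jIdx P) = preL (P (jIdx P)) (xVert P) ++ xVert P :: C := by
    rw [← hsufJ]; exact (preL_append_sufL _ _).symm
  have hDx : ∀ y ∈ preL (P (jIdx P)) (xVert P), y ≠ xVert P := fun y hy => ne_of_mem_preL hy
  have hAx : ∀ y ∈ A, y ≠ xVert P := fun y hy he => hAno y hy (he ▸ hox)
  have hQi : gP P (iIdx P) = A ++ xVert P :: C := by
    rw [gP_apply_i, hpreI, hsufJ]
  have hQj : gP P (jIdx P) = preL (P (jIdx P)) (xVert P) ++ xVert P :: B := by
    rw [gP_apply_j hji, hsufI]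
  have hQk : ∀ k, k ≠ iIdx P → k ≠ jIdx P → gP P k = P k := fun k h1 h2 => gP_apply_k h1 h2
  have hxPi : xVert P ∈ P (iIdx P) := by rw [hPi]; simp
  have hxQi : xVert P ∈ gP P (iIdx P) := by rw [hQi]; simp
  have hxQj : xVert P ∈ gP P (jIdx P) := by rw [hQj]; simp
  have hmemQ : ∀ y b, y ∈ gP P b → y ∈ P b ∨ y ∈ P (iIdx P) ∨ y ∈ P (jIdx P) := by
    intro y b hyb
    by_cases hbi : b = iIdx P
    · subst hbi
      rw [hQi] at hyb
      rcases List.mem_append.mp hyb with h | h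
      · exact Or.inr (Or.inl (by rw [hPi]; exact List.mem_append.mpr (Or.inl h)))
      · exact Or.inr (Or.inr (by rw [hPj]; exact List.mem_append.mpr (Or.inr h)))
    · by_cases hbj : b = jIdx P
      · subst hbj
        rw [hQj] at hyb
        rcases List.mem_append.mp hyb with h | h
        · exact Or.inr (Or.inr (by rw [hPj]; exact List.mem_append.mpr (Or.inl h)))
        · exact Or.inr (Or.inl (by rw [hPi]; exact List.mem_append.mpr (Or.inr h)))
      · rw [hQk b hbi hbj] at hyb; exact Or.inl hyb
  have hiltj : iIdx P < jIdx P :=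
    lt_of_le_of_ne (iIdx_min hne ⟨xVert P, hxj, ⟨iIdx P, hij, hxPi⟩⟩) hij
  have hlowQ : ∀ a, a < iIdx P → ¬ interP (gP P) a := by
    intro a ha hInt
    have hai : a ≠ iIdx P := ne_of_lt ha
    have haj : a ≠ jIdx P := ne_of_lt (lt_trans ha hiltj)
    obtain ⟨y, hya, b, hba, hyb⟩ := hInt
    rw [hQk a hai haj] at hya
    have : interP P a := by
      rcases hmemQ y b hyb with h | h | h
      · exact ⟨y, hya, b, hba, h⟩
      · exact ⟨y, hya, iIdx P, Ne.symm hai, h⟩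
      · exact ⟨y, hya, jIdx P, Ne.symm haj, h⟩
    exact absurd (iIdx_min hne this) (not_le.mpr ha)
  have hinterQi : interP (gP P) (iIdx P) := ⟨xVert P, hxQi, jIdx P, hji, hxQj⟩
  have hiQ : iIdx (gP P) = iIdx P := by
    have h1 : iIdx P ∈ Finset.univ.filter (interP (gP P)) :=
      Finset.mem_filter.mpr ⟨Finset.mem_univ _, hinterQi⟩
    have hS : (Finset.univ.filter (interP (gP P))).Nonempty := ⟨iIdx P, h1⟩
    rw [iIdx, dif_pos hS]
    refine le_antisymm (Finset.min'_le _ _ h1) (le_of_not_gt fun hc => ?_)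
    exact hlowQ _ hc (Finset.mem_filter.mp (Finset.min'_mem _ hS)).2
  have hndi := hnd (iIdx P)
  rw [hPi, List.nodup_append] at hndi
  have hdisj : ∀ y ∈ A, y ∉ xVert P :: B := fun y hy hy' => hndi.2.2 y hy y hy' rfl
  have hAnoQ : ∀ y ∈ A, ¬ otherP (gP P) (iIdx P) y := by
    rintro y hyA ⟨b, hbi, hyQb⟩
    by_cases hbj : b = jIdx P
    · subst hbj
      rw [hQj] at hyQb
      rcases List.mem_append.mp hyQb with h | h
      · exact hAno y hyA ⟨jIdx P, hji, by
          rw [hPj]; exact List.mem_append.mpr (Or.inl h)⟩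
      · exact hdisj y hyA h
    · rw [hQk b hbi hbj] at hyQb
      exact hAno y hyA ⟨b, hbi, hyQb⟩
  have hoxQ : otherP (gP P) (iIdx P) (xVert P) := ⟨jIdx P, hji, hxQj⟩
  have hxVQ : xVert (gP P) = xVert P := by
    rw [xVert, hiQ, hQi, dropWhile_append_cons (fun y hy => by simp [hAnoQ y hy])
      (by simpa using hoxQ) C]
    rfl
  have hjQ : jIdx (gP P) = jIdx P := by
    have h1 : jIdx P ∈ Finset.univ.filter
        (fun b => b ≠ iIdx (gP P) ∧ xVert (gP P) ∈ gP P b) := by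
      rw [Finset.mem_filter, hiQ, hxVQ]
      exact ⟨Finset.mem_univ _, hji, hxQj⟩
    have hS : (Finset.univ.filter
        (fun b => b ≠ iIdx (gP P) ∧ xVert (gP P) ∈ gP P b)).Nonempty := ⟨jIdx P, h1⟩
    rw [jIdx, dif_pos hS]
    refine le_antisymm (Finset.min'_le _ _ h1) ?_
    generalize hbdef : (Finset.univ.filter
        (fun b => b ≠ iIdx (gP P) ∧ xVert (gP P) ∈ gP P b)).min' hS = b
    have hbmem := hbdef ▸ Finset.min'_mem _ hS
    obtain ⟨-, hb1, hb2⟩ := Finset.mem_filter.mp hbmem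
    rw [hiQ] at hb1
    rw [hxVQ] at hb2
    by_cases hbj : b = jIdx P
    · exact le_of_eq hbj.symm
    · rw [hQk b hb1 hbj] at hb2
      exact hjmin b hb1 hb2
  have hgg : gP (gP P) = P := by
    funext k
    show (if k = iIdx (gP P) then _ else if k = jIdx (gP P) then _ else _) = P k
    rw [hiQ, hjQ]
    by_cases hki : k = iIdx P
    · rw [if_pos hki, hxVQ, hQi, hQj, preL_append_cons hAx C,
        sufL_append_cons hDx B, hki, ← hPi]
    · by_cases hkj : k = jIdx P
      · rw [if_neg hki, if_pos hkj, hxVQ, hQj, hQi, preL_append_cons hDx B,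
          sufL_append_cons hAx C, hkj, ← hPj]
      · rw [if_neg hki, if_neg hkj, hQk k hki hkj]
  exact ⟨hij, hiQ, hjQ, hgg, A, B, C, preL (P (jIdx P)) (xVert P), hPi, hPj, hQi, hQj, hQk⟩

end Invol

section Sums

variable {V : Type*} [Fintype V] [DecidableEq V] {R : Type*} [CommRing R]
variable {w : V → V → R} {rank : V → ℕ}

theorem prod_two_aux {m : ℕ} {f g : Fin m → R} {i j : Fin m} (hij : i ≠ j)
    (h2 : f i * f j = g i * g j) (h : ∀ k, k ≠ i → k ≠ j → f k = g k) :
    ∏ k, f k = ∏ k, g k := by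
  have hjmem : j ∈ (Finset.univ.erase i) := Finset.mem_erase.mpr ⟨hij.symm, Finset.mem_univ j⟩
  rw [← Finset.mul_prod_erase Finset.univ f (Finset.mem_univ i),
    ← Finset.mul_prod_erase _ f hjmem, ← mul_assoc,
    ← Finset.mul_prod_erase Finset.univ g (Finset.mem_univ i),
    ← Finset.mul_prod_erase _ g hjmem, ← mul_assoc, h2]
  congr 1
  refine Finset.prod_congr rfl fun k hk => ?_
  simp only [Finset.mem_erase] at hk
  exact h k hk.2.1 hk.1

theorem chain'_exchange {r : V → V → Prop} {A B C D : List V} {x : V}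
    (h1 : (A ++ x :: B).Chain' r) (h2 : (D ++ x :: C).Chain' r) : (A ++ x :: C).Chain' r := by
  unfold List.Chain' at h1 h2 ⊢; rw [List.isChain_append] at h1 h2 ⊢
  refine ⟨h1.1, h2.2.1, ?_⟩
  intro p hp y hy
  have hy' : y = x := by simpa [eq_comm] using hy
  subst hy'
  exact h1.2.2 p hp y (by simp)

theorem key (hacyc : ∀ a b, w a b ≠ 0 → rank a < rank b) {m : ℕ} (u v : Fin m → V) :
    ∑ σ : Equiv.Perm (Fin m), ((Equiv.Perm.sign σ : ℤ) : R) *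
      ∑ P ∈ (Fintype.piFinset fun k => pathFinset w (u k) (v (σ k))).filter
          (fun P => ¬ (∀ i j, i ≠ j → ∀ x ∈ P i, x ∉ P j)),
        ∏ k, pathWeight w (P k) = 0 := by
  rcases isEmpty_or_nonempty V with hV | hV
  · refine Finset.sum_eq_zero fun σ _ => ?_
    rw [Finset.sum_eq_zero, mul_zero]
    intro P hP
    rw [Finset.mem_filter] at hP
    exact absurd (fun i j _ x hx _ => hV.false x) hP.2
  obtain _ | n := m
  · refine Finset.sum_eq_zero fun σ _ => ?_
    rw [Finset.sum_eq_zero, mul_zero]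
    intro P hP
    rw [Finset.mem_filter] at hP
    exact absurd (fun i _ _ _ _ => i.elim0) hP.2
  haveI : Inhabited V := Classical.inhabited_of_nonempty hV
  -- the master fact about the tail-swapping involution
  have master : ∀ (σ : Equiv.Perm (Fin (n + 1))) (P : Fin (n + 1) → List V),
      (∀ k, P k ∈ pathFinset w (u k) (v (σ k))) →
      ¬ (∀ i j, i ≠ j → ∀ x ∈ P i, x ∉ P j) →
      (iIdx P ≠ jIdx P ∧ iIdx (gP P) = iIdx P ∧ jIdx (gP P) = jIdx P ∧ gP (gP P) = P ∧
       (∀ k, gP P k ∈ pathFinset w (u k)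
          (v ((σ * Equiv.swap (iIdx P) (jIdx P)) k))) ∧
       ¬ (∀ i j, i ≠ j → ∀ x ∈ gP P i, x ∉ gP P j) ∧
       ∏ k, pathWeight w (gP P k) = ∏ k, pathWeight w (P k)) := by
    intro σ P hP1 hP2
    push_neg at hP2
    obtain ⟨i₀, j₀, hij₀, x₀, hx₀i, hx₀j⟩ := hP2
    have hne : ∃ a, interP P a := ⟨i₀, x₀, hx₀i, j₀, Ne.symm hij₀, hx₀j⟩
    have hnd : ∀ k, (P k).Nodup := fun k =>
      nodup_of_chain' hacyc ((mem_pathFinset hacyc).mp (hP1 k)).2.2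
    obtain ⟨hij, hiQ, hjQ, hgg, A, B, C, D, hPi, hPj, hQi, hQj, hQk⟩ := gP_spec hne hnd
    have hPiMem := (mem_pathFinset hacyc).mp (hP1 (iIdx P))
    have hPjMem := (mem_pathFinset hacyc).mp (hP1 (jIdx P))
    have hxQi : xVert P ∈ gP P (iIdx P) := by rw [hQi]; simp
    have hxQj : xVert P ∈ gP P (jIdx P) := by rw [hQj]; simp
    refine ⟨hij, hiQ, hjQ, hgg, ?_, ?_, ?_⟩
    · intro k
      by_cases hki : k = iIdx P
      · subst hki
        rw [mem_pathFinset hacyc, hQi]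
        rw [hPi] at hPiMem
        rw [hPj] at hPjMem
        refine ⟨?_, ?_, chain'_exchange hPiMem.2.2 hPjMem.2.2⟩
        · rw [head?_append_cons]
          rw [head?_append_cons] at hPiMem
          exact hPiMem.1
        · rw [Equiv.Perm.mul_apply, Equiv.swap_apply_left, getLast?_append_cons]
          rw [getLast?_append_cons] at hPjMem
          exact hPjMem.2.1
      · by_cases hkj : k = jIdx P
        · subst hkj
          rw [mem_pathFinset hacyc, hQj]
          rw [hPi] at hPiMem
          rw [hPj] at hPjMem
          refine ⟨?_, ?_, chain'_exchange hPjMem.2.2 hPiMem.2.2⟩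
          · rw [head?_append_cons]
            rw [head?_append_cons] at hPjMem
            exact hPjMem.1
          · rw [Equiv.Perm.mul_apply, Equiv.swap_apply_right, getLast?_append_cons]
            rw [getLast?_append_cons] at hPiMem
            exact hPiMem.2.1
        · rw [hQk k hki hkj, Equiv.Perm.mul_apply, Equiv.swap_apply_of_ne_of_ne hki hkj]
          exact hP1 k
    · intro hD
      exact hD (iIdx P) (jIdx P) hij (xVert P) hxQi hxQj
    · refine prod_two_aux hij ?_ fun k h1 h2 => by rw [hQk k h1 h2]
      rw [hQi, hQj, hPi, hPj,
        pathWeight_append w (xVert P) A C, pathWeight_append w (xVert P) D B,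
        pathWeight_append w (xVert P) A B, pathWeight_append w (xVert P) D C]
      ring
  simp_rw [Finset.mul_sum]
  rw [Finset.sum_sigma']
  refine Finset.sum_involution
    (fun x hx => ⟨x.1 * Equiv.swap (iIdx x.2) (jIdx x.2), gP x.2⟩) ?_ ?_ ?_ ?_
  · rintro ⟨σ, P⟩ hx
    rw [Finset.mem_sigma, Finset.mem_filter, Fintype.mem_piFinset] at hx
    obtain ⟨hij, _, _, _, _, _, hW⟩ := master σ P hx.2.1 hx.2.2
    show ((Equiv.Perm.sign σ : ℤ) : R) * _ +
      ((Equiv.Perm.sign (σ * Equiv.swap (iIdx P) (jIdx P)) : ℤ) : R) * _ = 0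
    rw [hW, Equiv.Perm.sign_mul, Equiv.Perm.sign_swap hij]
    push_cast
    ring
  · rintro ⟨σ, P⟩ hx _ he
    rw [Finset.mem_sigma, Finset.mem_filter, Fintype.mem_piFinset] at hx
    obtain ⟨hij, -, -, -, -, -, -⟩ := master σ P hx.2.1 hx.2.2
    have h1 : σ * Equiv.swap (iIdx P) (jIdx P) = σ := congrArg Sigma.fst he
    have h2 : Equiv.swap (iIdx P) (jIdx P) = 1 := mul_eq_left.mp h1
    have := DFunLike.congr_fun h2 (iIdx P)
    rw [Equiv.swap_apply_left] at this
    exact hij (this.symm)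
  · rintro ⟨σ, P⟩ hx
    rw [Finset.mem_sigma, Finset.mem_filter, Fintype.mem_piFinset] at hx
    obtain ⟨hij, -, -, -, hQmem, hQdisj, -⟩ := master σ P hx.2.1 hx.2.2
    rw [Finset.mem_sigma, Finset.mem_filter, Fintype.mem_piFinset]
    exact ⟨Finset.mem_univ _, hQmem, hQdisj⟩
  · rintro ⟨σ, P⟩ hx
    rw [Finset.mem_sigma, Finset.mem_filter, Fintype.mem_piFinset] at hx
    obtain ⟨hij, hiQ, hjQ, hgg, -, -, -⟩ := master σ P hx.2.1 hx.2.2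
    show (⟨σ * Equiv.swap (iIdx P) (jIdx P) * Equiv.swap (iIdx (gP P)) (jIdx (gP P)),
      gP (gP P)⟩ : Σ _ : Equiv.Perm (Fin (n + 1)), (Fin (n + 1) → List V)) = ⟨σ, P⟩
    rw [hiQ, hjQ, hgg, mul_assoc, Equiv.swap_mul_self, mul_one]

theorem finsum_families (hacyc : ∀ a b, w a b ≠ 0 → rank a < rank b) {m : ℕ}
    (f g : Fin m → V) :
    (∑ᶠ P ∈ {P : Fin m → List V |
        (∀ k, (P k).head? = some (f k) ∧ (P k).getLast? = some (g k)) ∧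
        (∀ i j, i ≠ j → ∀ x ∈ P i, x ∉ P j)}, ∏ k, pathWeight w (P k))
    = ∑ P ∈ (Fintype.piFinset fun k => pathFinset w (f k) (g k)).filter
        (fun P => ∀ i j, i ≠ j → ∀ x ∈ P i, x ∉ P j), ∏ k, pathWeight w (P k) := by
  apply finsum_mem_eq_sum_of_inter_support_eq
  ext P
  simp only [Set.mem_inter_iff, Set.mem_setOf_eq, Function.mem_support, Finset.mem_coe,
    Finset.mem_filter, Fintype.mem_piFinset, mem_pathFinset hacyc]
  constructor
  · rintro ⟨⟨h1, h2⟩, h3⟩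
    refine ⟨⟨fun k => ⟨(h1 k).1, (h1 k).2, ?_⟩, h2⟩, h3⟩
    exact chain'_of_pathWeight_ne_zero w
      (fun h0 => h3 (Finset.prod_eq_zero (Finset.mem_univ k) h0))
  · rintro ⟨⟨h1, h2⟩, h3⟩
    exact ⟨⟨fun k => ⟨(h1 k).1, (h1 k).2.1⟩, h2⟩, h3⟩

theorem reindex_sum {m : ℕ} (u v : Fin m → V) (σ : Equiv.Perm (Fin m)) :
    (∑ P ∈ (Fintype.piFinset fun k => pathFinset w (u (σ k)) (v k)).filter
      (fun P => ¬ (∀ i j, i ≠ j → ∀ x ∈ P i, x ∉ P j)), ∏ k, pathWeight w (P k))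
    = ∑ P ∈ (Fintype.piFinset fun k => pathFinset w (u k) (v (σ⁻¹ k))).filter
      (fun P => ¬ (∀ i j, i ≠ j → ∀ x ∈ P i, x ∉ P j)), ∏ k, pathWeight w (P k) := by
  refine Finset.sum_bij' (fun P _ => fun a => P (σ⁻¹ a)) (fun P _ => fun k => P (σ k))
    ?_ ?_ ?_ ?_ ?_
  · intro P hP
    rw [Finset.mem_filter, Fintype.mem_piFinset] at hP ⊢
    refine ⟨fun a => ?_, fun hD => hP.2 fun i j hij x hxi hxj => ?_⟩
    · have := hP.1 (σ⁻¹ a)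
      rwa [Equiv.Perm.coe_inv, Equiv.apply_symm_apply] at this
    · exact hD (σ i) (σ j) (fun h => hij (σ.injective h)) x
        (by simpa using hxi)
        (by simpa using hxj)
  · intro P hP
    rw [Finset.mem_filter, Fintype.mem_piFinset] at hP ⊢
    refine ⟨fun a => ?_, fun hD => hP.2 fun i j hij x hxi hxj => ?_⟩
    · have := hP.1 (σ a)
      rwa [Equiv.Perm.coe_inv, Equiv.symm_apply_apply] at this
    · exact hD (σ⁻¹ i) (σ⁻¹ j) (fun h => hij (σ.symm.injective h)) x
        (by simpa using hxi)
        (by simpa using hxj)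
  · intro P _
    funext k
    simp
  · intro P _
    funext a
    simp
  · intro P _
    exact (Equiv.prod_comp σ⁻¹ fun a => pathWeight w (P a)).symm

end Sums

end LGVAux

/-- Lindström–Gessel–Viennot: for a finite acyclic weighted directed graph (acyclicity
witnessed by a rank function which strictly increases along edges of nonzero weight),
the signed generating function of nonintersecting path families from `u_{σ(k)}` to `v_k`
equals the determinant of the path matrix. -/
theorem lindstrom_gessel_viennot {V : Type*} [Fintype V] [DecidableEq V]
    {R : Type*} [CommRing R] {m : ℕ}
    (w : V → V → R) (rank : V → ℕ)
    (hacyc : ∀ a b : V, w a b ≠ 0 → rank a < rank b)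
    (u v : Fin m → V) :
    ∑ σ : Equiv.Perm (Fin m), ((Equiv.Perm.sign σ : ℤ) : R) *
      ∑ᶠ P ∈ {P : Fin m → List V |
          (∀ k, (P k).head? = some (u (σ k)) ∧ (P k).getLast? = some (v k)) ∧
          (∀ i j, i ≠ j → ∀ x ∈ P i, x ∉ P j)},
        ∏ k, pathWeight w (P k)
      = Matrix.det (Matrix.of fun i j => pathGF w (u i) (v j)) := by
  classical
  rw [Matrix.det_apply]
  have step2 : ∀ σ : Equiv.Perm (Fin m),
      (Equiv.Perm.sign σ • ∏ i, (Matrix.of fun i j => pathGF w (u i) (v j)) (σ i) i)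
      = ((Equiv.Perm.sign σ : ℤ) : R) *
          ((∑ P ∈ (Fintype.piFinset fun k => LGVAux.pathFinset w (u (σ k)) (v k)).filter
              (fun P => ∀ i j, i ≠ j → ∀ x ∈ P i, x ∉ P j), ∏ k, pathWeight w (P k)) +
           (∑ P ∈ (Fintype.piFinset fun k => LGVAux.pathFinset w (u (σ k)) (v k)).filter
              (fun P => ¬ (∀ i j, i ≠ j → ∀ x ∈ P i, x ∉ P j)), ∏ k, pathWeight w (P k))) := by
    intro σ
    rw [Units.smul_def, zsmul_eq_mul]
    congr 1
    rw [Finset.sum_filter_add_sum_filter_not]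
    calc ∏ i, (Matrix.of fun i j => pathGF w (u i) (v j)) (σ i) i
        = ∏ i, pathGF w (u (σ i)) (v i) := rfl
      _ = ∏ i, ∑ l ∈ LGVAux.pathFinset w (u (σ i)) (v i), pathWeight w l :=
          Finset.prod_congr rfl fun i _ => LGVAux.pathGF_eq hacyc _ _
      _ = _ := Finset.prod_univ_sum _ _
  rw [Finset.sum_congr rfl fun σ _ => step2 σ]
  have hLHS : ∀ σ : Equiv.Perm (Fin m),
      (∑ᶠ P ∈ {P : Fin m → List V |
          (∀ k, (P k).head? = some (u (σ k)) ∧ (P k).getLast? = some (v k)) ∧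
          (∀ i j, i ≠ j → ∀ x ∈ P i, x ∉ P j)}, ∏ k, pathWeight w (P k))
      = ∑ P ∈ (Fintype.piFinset fun k => LGVAux.pathFinset w (u (σ k)) (v k)).filter
          (fun P => ∀ i j, i ≠ j → ∀ x ∈ P i, x ∉ P j), ∏ k, pathWeight w (P k) :=
    fun σ => LGVAux.finsum_families hacyc (fun k => u (σ k)) v
  simp_rw [hLHS, mul_add]
  rw [Finset.sum_add_distrib, left_eq_add]
  -- the intersecting families sum to zero
  have := LGVAux.key (w := w) hacyc u v
  calc ∑ σ : Equiv.Perm (Fin m), ((Equiv.Perm.sign σ : ℤ) : R) *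
        ∑ P ∈ (Fintype.piFinset fun k => LGVAux.pathFinset w (u (σ k)) (v k)).filter
          (fun P => ¬ (∀ i j, i ≠ j → ∀ x ∈ P i, x ∉ P j)), ∏ k, pathWeight w (P k)
      = ∑ σ : Equiv.Perm (Fin m), ((Equiv.Perm.sign σ : ℤ) : R) *
        ∑ P ∈ (Fintype.piFinset fun k => LGVAux.pathFinset w (u k) (v (σ⁻¹ k))).filter
          (fun P => ¬ (∀ i j, i ≠ j → ∀ x ∈ P i, x ∉ P j)), ∏ k, pathWeight w (P k) := by
        refine Finset.sum_congr rfl fun σ _ => ?_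
        rw [LGVAux.reindex_sum u v σ]
    _ = ∑ σ : Equiv.Perm (Fin m), ((Equiv.Perm.sign σ : ℤ) : R) *
        ∑ P ∈ (Fintype.piFinset fun k => LGVAux.pathFinset w (u k) (v (σ k))).filter
          (fun P => ¬ (∀ i j, i ≠ j → ∀ x ∈ P i, x ∉ P j)), ∏ k, pathWeight w (P k) := by
        refine Fintype.sum_equiv (Equiv.inv (Equiv.Perm (Fin m))) _ _ fun σ => ?_
        simp [Equiv.inv_apply, Equiv.Perm.sign_inv]
    _ = 0 := this
end
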